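/- Let n >= 2, let S_n be the symmetric group on [n] with Coxeter element c = (1 2 ... n). For every w in S_n, aexc(Pop_T(w)) = aexc(w) - cyc_{>1}(pi_T(w)), where cyc_{>1}(pi_T(w)) is the number of non-singleton cycles of the noncrossing projection pi_T(w). -/

import Mathlib

/-!
Common definitions: reflection length (absolute length) with respect to a set `R` of
"reflections" in a group, the absolute order, joins in the noncrossing partition lattice
`NC(W,c) = [1,c]`, the noncrossing projection `piT`, and the pop-tsack torsing operator `popT`.
-/

namespace PopTsack

variable {G : Type*} [Group G]

open scoped Classical

/-- The reflection length of `w` with respect to the set `R` of reflections: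
the least `r` such that `w` is a product of `r` elements of `R`. -/
noncomputable def absLength (R : Set G) (w : G) : ℕ :=
  sInf {r : ℕ | ∃ l : List G, l.length = r ∧ (∀ t ∈ l, t ∈ R) ∧ l.prod = w}

/-- The absolute order: `v ≤_T w` iff `ℓ_T v + ℓ_T (w v⁻¹) = ℓ_T w`. -/
def absLe (R : Set G) (v w : G) : Prop :=
  absLength R v + absLength R (w * v⁻¹) = absLength R w

/-- `p` is the join, in the noncrossing partition lattice `NC(G,c)` (the interval `[1,c]`
in absolute order), of the set `A ⊆ NC(G,c)`. -/
def IsNCJoin (R : Set G) (c : G) (A : Set G) (p : G) : Prop :=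
  absLe R p c ∧ (∀ a ∈ A, absLe R a p) ∧
    ∀ q : G, absLe R q c → (∀ a ∈ A, absLe R a q) → absLe R p q

/-- The noncrossing projection `π_T(w,c)`: the join in `NC(G,c)` of the set of reflections
lying weakly below `w` in absolute order.  (By Brady–Watt, `NC(G,c)` is a lattice when `G` is a
finite Coxeter group and `c` a Coxeter element, so this join exists; the value is defined by
choice and defaults to `1` in the degenerate case where no join exists.) -/
noncomputable def piT (R : Set G) (c w : G) : G :=
  if h : ∃ p : G, IsNCJoin R c {t | t ∈ R ∧ absLe R t w} p then h.choose else 1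

/-- The Coxeter pop-tsack torsing operator `Pop_T(w,c) = w ⬝ π_T(w,c)⁻¹`. -/
noncomputable def popT (R : Set G) (c w : G) : G := w * (piT R c w)⁻¹

end PopTsack


/-- The number of antiexceedances of a permutation `w` of `Fin n`: the number of `i` with
`i < w⁻¹ i`. -/
def Equiv.Perm.aexc {n : ℕ} (w : Equiv.Perm (Fin n)) : ℕ :=
  (Finset.univ.filter fun i : Fin n => i < w⁻¹ i).card

set_option linter.unusedSectionVars false

namespace PopAux
open Equiv Equiv.Perm PopTsack

variable {α : Type*} [Fintype α] [DecidableEq α]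

/-- set of transpositions -/
abbrev RR (α : Type*) [Fintype α] [DecidableEq α] : Set (Perm α) := {t : Perm α | t.IsSwap}

noncomputable def L (v : Perm α) : ℕ := absLength (RR α) v

lemma rep_nonempty (v : Perm α) :
    {r : ℕ | ∃ l : List (Perm α), l.length = r ∧ (∀ t ∈ l, t ∈ RR α) ∧ l.prod = v}.Nonempty := by
  obtain ⟨l, hl, hsw⟩ := (Equiv.Perm.truncSwapFactors v).out
  exact ⟨l.length, l, rfl, fun t ht => hsw t ht, hl⟩

lemma L_spec (v : Perm α) :
    ∃ l : List (Perm α), l.length = L v ∧ (∀ t ∈ l, t ∈ RR α) ∧ l.prod = v :=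
  Nat.sInf_mem (rep_nonempty v)

lemma L_le {v : Perm α} {l : List (Perm α)} (h : ∀ t ∈ l, t ∈ RR α) (hp : l.prod = v) :
    L v ≤ l.length :=
  Nat.sInf_le ⟨l, rfl, h, hp⟩

@[simp] lemma L_one : L (1 : Perm α) = 0 :=
  Nat.le_zero.mp (L_le (l := []) (by simp) (by simp))

lemma eq_one_of_L_eq_zero {v : Perm α} (h : L v = 0) : v = 1 := by
  obtain ⟨l, hl, _, hp⟩ := L_spec v
  rw [h, List.length_eq_zero_iff] at hl
  rw [← hp, hl, List.prod_nil]

lemma L_mul_le (a b : Perm α) : L (a * b) ≤ L a + L b := by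
  obtain ⟨la, hla, ha, hpa⟩ := L_spec a
  obtain ⟨lb, hlb, hb, hpb⟩ := L_spec b
  have := L_le (v := a * b) (l := la ++ lb) ?_ ?_
  · simpa [hla, hlb] using this
  · intro t ht; rcases List.mem_append.mp ht with h | h
    · exact ha t h
    · exact hb t h
  · rw [List.prod_append, hpa, hpb]

lemma L_swap {i j : α} (h : i ≠ j) : L (swap i j) = 1 := by
  have h1 : L (swap i j) ≤ 1 := L_le (l := [swap i j]) (by simp [RR, IsSwap]; exact ⟨i, j, h, rfl⟩) (by simp)
  have h0 : L (swap i j) ≠ 0 := by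
    intro h0
    have := eq_one_of_L_eq_zero h0
    have h2 : j = i := by simpa using congrArg (fun (σ : Perm α) => σ i) this
    exact h h2.symm
  omega

/-- the same-cycle setoid -/
def SC (v : Perm α) : Setoid α :=
  ⟨v.SameCycle, ⟨SameCycle.refl v, SameCycle.symm, SameCycle.trans⟩⟩

noncomputable def cyc (v : Perm α) : ℕ := Nat.card (Quotient (SC v))

lemma sameCycle_iff_exists_nat_pow {v : Perm α} {x y : α} :
    v.SameCycle x y ↔ ∃ k : ℕ, (v ^ k) x = y := by
  constructor
  · intro h
    obtain ⟨i, _, hi⟩ := h.exists_pow_eq'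
    exact ⟨i, hi⟩
  · rintro ⟨k, hk⟩
    exact ⟨k, by simpa using hk⟩


lemma sameCycle_of_fixed {v : Perm α} {x y : α} (hx : v x = x) (h : v.SameCycle x y) : y = x := by
  obtain ⟨k, hk⟩ := sameCycle_iff_exists_nat_pow.mp h
  have : ∀ m : ℕ, (v ^ m) x = x := by
    intro m; induction m with
    | zero => simp
    | succ m ih => rw [pow_succ, Perm.mul_apply, hx]; exact ih
  rw [this k] at hk; exact hk.symm

/-- single-step orbit lemma -/
lemma step_refine {v : Perm α} {i j : α} (hij : v.SameCycle i j) (s : α) :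
    v.SameCycle s ((v * swap i j) s) := by
  rcases eq_or_ne s i with rfl | hsi
  · simp only [Perm.mul_apply, swap_apply_left]
    exact hij.trans ⟨1, by simp⟩
  rcases eq_or_ne s j with rfl | hsj
  · simp only [Perm.mul_apply, swap_apply_right]
    exact hij.symm.trans ⟨1, by simp⟩
  · simp only [Perm.mul_apply, swap_apply_of_ne_of_ne hsi hsj]
    exact ⟨1, by simp⟩

/-- (a): if i,j are in the same v-cycle, the cycles of v * swap i j refine those of v -/
lemma refine_of_sameCycle {v : Perm α} {i j : α} (hij : v.SameCycle i j) {x y : α}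
    (h : (v * swap i j).SameCycle x y) : v.SameCycle x y := by
  obtain ⟨k, hk⟩ := sameCycle_iff_exists_nat_pow.mp h
  subst hk
  clear h
  induction k with
  | zero => simpa using SameCycle.refl v x
  | succ k ih =>
    rw [pow_succ', Perm.mul_apply]
    exact ih.trans (step_refine hij _)


/-- key computation: iterating `v * swap i j` from `i` tracks powers of `v` applied to `j`,
as long as we avoid `{i, j}`. -/
lemma key_pow {v : Perm α} {i j : α} :
    ∀ k : ℕ, (∀ m : ℕ, 1 ≤ m → m ≤ k → (v ^ m) j ≠ i ∧ (v ^ m) j ≠ j) →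
      ((v * swap i j) ^ (k + 1)) i = (v ^ (k + 1)) j := by
  intro k
  induction k with
  | zero =>
    intro _
    simp [Perm.mul_apply]
  | succ k ih =>
    intro hcond
    have hk : ((v * swap i j) ^ (k + 1)) i = (v ^ (k + 1)) j :=
      ih (fun m h1 h2 => hcond m h1 (h2.trans (Nat.le_succ _)))
    have hmem := hcond (k + 1) (by omega) (by omega)
    rw [pow_succ', Perm.mul_apply, hk, Perm.mul_apply,
      swap_apply_of_ne_of_ne hmem.1 hmem.2, ← Perm.mul_apply, ← pow_succ']

lemma pow_apply_mod {σ : Perm α} {x : α} {p : ℕ} (hp : (σ ^ p) x = x) (k : ℕ) :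
    (σ ^ k) x = (σ ^ (k % p)) x := by
  conv_lhs => rw [← Nat.mod_add_div k p]
  rw [pow_add]
  have : ∀ q : ℕ, (σ ^ (p * q)) x = x := by
    intro q
    induction q with
    | zero => simp
    | succ q ih => rw [Nat.mul_succ, pow_add, Perm.mul_apply, hp, ih]
  rw [Perm.mul_apply, this]

/-- (b): splitting separates `i` and `j`. -/
lemma not_sameCycle_mul_swap {v : Perm α} {i j : α} (hij : i ≠ j) (h : v.SameCycle i j) :
    ¬ (v * swap i j).SameCycle i j := by
  classical
  have hI : ∃ m : ℕ, 1 ≤ m ∧ (v ^ m) j = i := by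
    obtain ⟨k, hk⟩ := sameCycle_iff_exists_nat_pow.mp h.symm
    refine ⟨k, ?_, hk⟩
    rcases Nat.eq_zero_or_pos k with rfl | hpos
    · simp at hk; exact absurd hk.symm hij
    · exact hpos
  obtain ⟨m0, ⟨hm01, hm02⟩, hm0min⟩ :
      ∃ m0 : ℕ, (1 ≤ m0 ∧ (v ^ m0) j = i) ∧ ∀ t, (1 ≤ t ∧ (v ^ t) j = i) → m0 ≤ t :=
    ⟨sInf {m | 1 ≤ m ∧ (v ^ m) j = i}, Nat.sInf_mem (s := {m : ℕ | 1 ≤ m ∧ (v ^ m) j = i}) hI,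
      fun t ht => Nat.sInf_le (show t ∈ {m : ℕ | 1 ≤ m ∧ (v ^ m) j = i} from ht)⟩
  obtain ⟨s, ⟨hs1, hs2⟩, hsmin⟩ :
      ∃ s : ℕ, (1 ≤ s ∧ ((v ^ s) j = i ∨ (v ^ s) j = j)) ∧
        ∀ t, (1 ≤ t ∧ ((v ^ t) j = i ∨ (v ^ t) j = j)) → s ≤ t :=
    ⟨sInf {m | 1 ≤ m ∧ ((v ^ m) j = i ∨ (v ^ m) j = j)},
      Nat.sInf_mem (s := {m : ℕ | 1 ≤ m ∧ ((v ^ m) j = i ∨ (v ^ m) j = j)}) ⟨m0, hm01, Or.inl hm02⟩,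
      fun t ht => Nat.sInf_le (show t ∈ {m : ℕ | 1 ≤ m ∧ ((v ^ m) j = i ∨ (v ^ m) j = j)} from ht)⟩
  have hsm0 : s ≤ m0 := hsmin m0 ⟨hm01, Or.inl hm02⟩
  have hsi : (v ^ s) j = i := by
    rcases hs2 with h' | h'
    · exact h'
    · exfalso
      have hsne : s ≠ m0 := by
        intro hc; rw [hc, hm02] at h'; exact hij h'
      have hup : (v ^ (m0 - s)) j = i := by
        have he : m0 - s + s = m0 := by omega
        have hsplit : (v ^ (m0 - s)) ((v ^ s) j) = (v ^ m0) j := by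
          rw [← Perm.mul_apply, ← pow_add, he]
        rw [h'] at hsplit; rw [hsplit]; exact hm02
      have h1 : 1 ≤ m0 - s := by omega
      have := hm0min (m0 - s) ⟨h1, hup⟩
      omega
  have hret : ((v * swap i j) ^ s) i = i := by
    obtain ⟨s', hs'⟩ : ∃ s', s = s' + 1 := ⟨s - 1, by omega⟩
    rw [hs', key_pow s' ?_]
    · rw [← hs']; exact hsi
    · intro m h1 h2
      constructor
      · intro hc
        have := hsmin m ⟨h1, Or.inl hc⟩; omega
      · intro hc
        have := hsmin m ⟨h1, Or.inr hc⟩; omega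
  intro hcon
  obtain ⟨k, hk⟩ := sameCycle_iff_exists_nat_pow.mp hcon
  rw [pow_apply_mod hret k] at hk
  have hklt : k % s < s := Nat.mod_lt _ (by omega)
  rcases Nat.eq_zero_or_pos (k % s) with h0 | hpos
  · rw [h0] at hk; simp at hk; exact hij hk
  · obtain ⟨r', hr'⟩ : ∃ r', k % s = r' + 1 := ⟨k % s - 1, by omega⟩
    rw [hr', key_pow r' ?_] at hk
    · have := hsmin (r' + 1) ⟨by omega, Or.inr hk⟩
      omega
    · intro m h1 h2
      constructor
      · intro hc
        have := hsmin m ⟨h1, Or.inl hc⟩; omega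
      · intro hc
        have := hsmin m ⟨h1, Or.inr hc⟩; omega

/-- (c): merging joins `i` and `j`. -/
lemma sameCycle_mul_swap_of_not {v : Perm α} {i j : α} (h : ¬ v.SameCycle i j) :
    (v * swap i j).SameCycle i j := by
  classical
  have hJ : ∃ m : ℕ, 1 ≤ m ∧ (v ^ m) j = j := by
    refine ⟨orderOf v, ?_, by rw [pow_orderOf_eq_one]; simp⟩
    have : orderOf v ≠ 0 := (orderOf_pos v).ne'
    omega
  obtain ⟨m1, ⟨hm11, hm12⟩, hm1min⟩ :
      ∃ m1 : ℕ, (1 ≤ m1 ∧ (v ^ m1) j = j) ∧ ∀ t, (1 ≤ t ∧ (v ^ t) j = j) → m1 ≤ t :=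
    ⟨sInf {m | 1 ≤ m ∧ (v ^ m) j = j}, Nat.sInf_mem (s := {m : ℕ | 1 ≤ m ∧ (v ^ m) j = j}) hJ,
      fun t ht => Nat.sInf_le (show t ∈ {m : ℕ | 1 ≤ m ∧ (v ^ m) j = j} from ht)⟩
  obtain ⟨m', hm'⟩ : ∃ m', m1 = m' + 1 := ⟨m1 - 1, by omega⟩
  apply sameCycle_iff_exists_nat_pow.mpr
  refine ⟨m1, ?_⟩
  rw [hm', key_pow m' ?_]
  · rw [← hm']; exact hm12
  · intro m h1 h2
    constructor
    · intro hc
      exact h (SameCycle.symm ⟨(m : ℤ), by simpa using hc⟩)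
    · intro hc
      have := hm1min m ⟨h1, hc⟩; omega


/-- auxiliary relation for the merge case -/
def Rel (v : Perm α) (i j x y : α) : Prop :=
  v.SameCycle x y ∨ (v.SameCycle x i ∧ v.SameCycle j y) ∨ (v.SameCycle x j ∧ v.SameCycle i y)

lemma rel_trans {v : Perm α} {i j x y z : α} (h1 : Rel v i j x y) (h2 : Rel v i j y z) :
    Rel v i j x z := by
  rcases h1 with h1 | ⟨h1a, h1b⟩ | ⟨h1a, h1b⟩ <;>
    rcases h2 with h2 | ⟨h2a, h2b⟩ | ⟨h2a, h2b⟩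
  · exact Or.inl (h1.trans h2)
  · exact Or.inr (Or.inl ⟨h1.trans h2a, h2b⟩)
  · exact Or.inr (Or.inr ⟨h1.trans h2a, h2b⟩)
  · exact Or.inr (Or.inl ⟨h1a, h1b.trans h2⟩)
  · exact Or.inl (h1a.trans ((h1b.trans h2a).symm.trans h2b))
  · exact Or.inl (h1a.trans h2b)
  · exact Or.inr (Or.inr ⟨h1a, h1b.trans h2⟩)
  · exact Or.inl (h1a.trans h2b)
  · exact Or.inl (h1a.trans ((h1b.trans h2a).symm.trans h2b))

lemma rel_step (v : Perm α) (i j s : α) : Rel v i j s ((v * swap i j) s) := by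
  rcases eq_or_ne s i with rfl | hsi
  · simp only [Perm.mul_apply, swap_apply_left]
    exact Or.inr (Or.inl ⟨SameCycle.refl _ _, ⟨1, by simp⟩⟩)
  rcases eq_or_ne s j with rfl | hsj
  · simp only [Perm.mul_apply, swap_apply_right]
    exact Or.inr (Or.inr ⟨SameCycle.refl _ _, ⟨1, by simp⟩⟩)
  · simp only [Perm.mul_apply, swap_apply_of_ne_of_ne hsi hsj]
    exact Or.inl ⟨1, by simp⟩

lemma rel_of_sameCycle_mul {v : Perm α} {i j x y : α}
    (h : (v * swap i j).SameCycle x y) : Rel v i j x y := by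
  obtain ⟨k, hk⟩ := sameCycle_iff_exists_nat_pow.mp h
  subst hk
  clear h
  induction k with
  | zero => exact Or.inl (by simpa using SameCycle.refl v x)
  | succ k ih =>
    rw [pow_succ', Perm.mul_apply]
    exact rel_trans ih (rel_step v i j _)

section CycCount

/-- number of cycles (orbits, including fixed points) -/
lemma cyc_mul_swap_lt {v : Perm α} {i j : α} (hij : i ≠ j) (h : v.SameCycle i j) :
    cyc v < cyc (v * swap i j) := by
  classical
  set u := v * swap i j with hu
  letI : Fintype (Quotient (SC u)) := Fintype.ofFinite _
  letI : Fintype (Quotient (SC v)) := Fintype.ofFinite _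
  rw [cyc, cyc, Nat.card_eq_fintype_card, Nat.card_eq_fintype_card]
  have hwd : ∀ a b : α, (SC u).r a b → (SC v).r a b := fun a b hab => refine_of_sameCycle h hab
  set φ : Quotient (SC u) → Quotient (SC v) := Quotient.map' id hwd with hφ
  apply Fintype.card_lt_of_surjective_not_injective φ
  · intro q
    obtain ⟨a, rfl⟩ := Quotient.exists_rep q
    exact ⟨Quotient.mk _ a, rfl⟩
  · intro hinj
    have h1 : φ (Quotient.mk _ i) = φ (Quotient.mk _ j) := by
      show Quotient.mk _ i = Quotient.mk _ j
      exact Quotient.sound h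
    have h2 := hinj h1
    have h3 : (SC u).r i j := Quotient.exact h2
    exact not_sameCycle_mul_swap hij h h3

lemma cyc_le_cyc_mul_swap_add_one (v : Perm α) (i j : α) :
    cyc v ≤ cyc (v * swap i j) + 1 := by
  classical
  rcases eq_or_ne i j with rfl | hij
  · simp [swap_self, Perm.mul_refl]
  set u := v * swap i j with hu
  by_cases h : v.SameCycle i j
  · exact (cyc_mul_swap_lt hij h).le.trans (Nat.le_succ _)
  · have hm : u.SameCycle i j := sameCycle_mul_swap_of_not h
    have hwd : ∀ a b : α, (SC v).r a b → (SC u).r a b := by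
      intro a b hab
      have : (u * swap i j).SameCycle a b := by
        rw [hu, mul_swap_mul_self]; exact hab
      exact refine_of_sameCycle hm this
    set ψ : Quotient (SC v) → Quotient (SC u) := Quotient.map' id hwd with hψ
    set χ : Quotient (SC v) → Option (Quotient (SC u)) :=
      fun q => if q = Quotient.mk _ i then none else some (ψ q) with hχ
    have hinj : Function.Injective χ := by
      intro q1 q2 hq
      obtain ⟨a, rfl⟩ := Quotient.exists_rep q1
      obtain ⟨b, rfl⟩ := Quotient.exists_rep q2
      by_cases h1 : Quotient.mk (SC v) a = Quotient.mk (SC v) i <;>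
        by_cases h2 : Quotient.mk (SC v) b = Quotient.mk (SC v) i
      · rw [h1, h2]
      · exact absurd hq (by rw [hχ]; simp only [if_pos h1, if_neg h2]; simp)
      · exact absurd hq (by rw [hχ]; simp only [if_neg h1, if_pos h2]; simp)
      · rw [hχ] at hq; simp only [if_neg h1, if_neg h2, Option.some_inj] at hq
        have hab : (SC u).r a b := Quotient.exact hq
        have := rel_of_sameCycle_mul (v := v) (i := i) (j := j) hab
        rcases this with h' | ⟨h'a, h'b⟩ | ⟨h'a, h'b⟩
        · exact Quotient.sound h'
        · exact absurd (Quotient.sound h'a) h1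
        · exact absurd (Quotient.sound h'b.symm) h2
    have := Nat.card_le_card_of_injective χ hinj
    rw [Finite.card_option] at this
    exact this


lemma cyc_one : cyc (1 : Perm α) = Fintype.card α := by
  classical
  letI : Fintype (Quotient (SC (1 : Perm α))) := Fintype.ofFinite _
  rw [cyc, Nat.card_eq_fintype_card]
  refine (Fintype.card_of_bijective (f := Quotient.mk (SC (1 : Perm α))) ?_).symm
  constructor
  · intro a b hab
    exact Equiv.Perm.sameCycle_one.mp (Quotient.exact hab)
  · intro q; obtain ⟨a, rfl⟩ := Quotient.exists_rep q; exact ⟨a, rfl⟩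

lemma cyc_le_card (v : Perm α) : cyc v ≤ Fintype.card α := by
  rw [cyc, ← Nat.card_eq_fintype_card]
  exact Nat.card_le_card_of_surjective (Quotient.mk (SC v))
    (fun q => by obtain ⟨a, rfl⟩ := Quotient.exists_rep q; exact ⟨a, rfl⟩)

lemma eq_one_of_cyc_eq_card {v : Perm α} (h : cyc v = Fintype.card α) : v = 1 := by
  classical
  letI : Fintype (Quotient (SC v)) := Fintype.ofFinite _
  have hsurj : Function.Surjective (Quotient.mk (SC v)) :=
    fun q => by obtain ⟨a, rfl⟩ := Quotient.exists_rep q; exact ⟨a, rfl⟩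
  have hcard : Fintype.card α = Fintype.card (Quotient (SC v)) := by
    rw [← Nat.card_eq_fintype_card (α := Quotient (SC v)), ← cyc, h]
  have hbij : Function.Bijective (Quotient.mk (SC v)) :=
    (Fintype.bijective_iff_surjective_and_card _).mpr ⟨hsurj, hcard⟩
  ext x
  have : Quotient.mk (SC v) x = Quotient.mk (SC v) (v x) :=
    Quotient.sound (⟨1, by simp⟩ : v.SameCycle x (v x))
  have := hbij.1 this
  simp [← this]

/-- lower bound: a product of `r` swaps has at least `card α - r` cycles -/
lemma card_le_cyc_add_length :
    ∀ l : List (Perm α), (∀ t ∈ l, t ∈ RR α) → Fintype.card α ≤ cyc l.prod + l.length := by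
  intro l
  induction l with
  | nil => intro _; simp [cyc_one]
  | cons t l ih =>
    intro hmem
    have ht : t.IsSwap := hmem t (by simp)
    obtain ⟨a, b, hab, rfl⟩ := ht
    have hrest := ih (fun s hs => hmem s (List.mem_cons_of_mem _ hs))
    have hconj : swap a b * l.prod = l.prod * swap (l.prod⁻¹ a) (l.prod⁻¹ b) := by
      have := Equiv.swap_apply_apply l.prod (l.prod⁻¹ a) (l.prod⁻¹ b)
      simp only [Perm.coe_inv, apply_symm_apply] at this ⊢
      rw [this]
      group
    have hle : cyc l.prod ≤ cyc (swap a b * l.prod) + 1 := by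
      rw [hconj]
      exact cyc_le_cyc_mul_swap_add_one l.prod _ _
    rw [List.prod_cons]
    simp only [List.length_cons]
    omega

/-- the key formula: absolute length with respect to transpositions -/
lemma L_add_cyc (v : Perm α) : L v + cyc v = Fintype.card α := by
  have hlow : Fintype.card α ≤ cyc v + L v := by
    obtain ⟨l, hl, hmem, hprod⟩ := L_spec v
    have := card_le_cyc_add_length l hmem
    rw [hprod, hl] at this
    omega
  have hup : ∀ k : ℕ, ∀ v : Perm α, Fintype.card α ≤ cyc v + k →
      L v + cyc v ≤ Fintype.card α := by
    intro k
    induction k with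
    | zero =>
      intro v hv
      have h1 : cyc v = Fintype.card α := le_antisymm (cyc_le_card v) (by omega)
      rw [eq_one_of_cyc_eq_card h1, L_one, cyc_one]
      simp
    | succ k ih =>
      intro v hv
      by_cases h1 : v = 1
      · subst h1; rw [L_one]; simpa using cyc_le_card 1
      · obtain ⟨x, hx⟩ : ∃ x, v x ≠ x := by
          by_contra hc
          push_neg at hc
          exact h1 (Equiv.ext hc)
        have hxne : x ≠ v x := fun hc => hx hc.symm
        have hsc : v.SameCycle x (v x) := ⟨1, by simp⟩
        have hlt : cyc v < cyc (v * swap x (v x)) := cyc_mul_swap_lt hxne hsc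
        have hIH := ih (v * swap x (v x)) (by omega)
        have hLv : L v ≤ L (v * swap x (v x)) + 1 := by
          calc L v = L ((v * swap x (v x)) * swap x (v x)) := by rw [mul_swap_mul_self]
            _ ≤ L (v * swap x (v x)) + L (swap x (v x)) := L_mul_le _ _
            _ = L (v * swap x (v x)) + 1 := by rw [L_swap hxne]
        omega
  exact le_antisymm (hup (L v) v (by omega)) (by omega)

lemma L_mul_swap_of_sameCycle {v : Perm α} {i j : α} (hij : i ≠ j) (h : v.SameCycle i j) :
    L (v * swap i j) + 1 = L v := by
  have h1 := cyc_mul_swap_lt hij h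
  have h2 := L_add_cyc v
  have h3 := L_add_cyc (v * swap i j)
  have h4 : L v ≤ L (v * swap i j) + 1 := by
    have hv : v = (v * swap i j) * swap i j := by rw [mul_swap_mul_self]
    calc L v = L ((v * swap i j) * swap i j) := by rw [← hv]
      _ ≤ L (v * swap i j) + L (swap i j) := L_mul_le _ _
      _ = L (v * swap i j) + 1 := by rw [L_swap hij]
  omega

lemma L_mul_swap_of_not_sameCycle {v : Perm α} {i j : α} (hij : i ≠ j)
    (h : ¬ v.SameCycle i j) : L (v * swap i j) = L v + 1 := by
  have hm : (v * swap i j).SameCycle i j := sameCycle_mul_swap_of_not h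
  have := L_mul_swap_of_sameCycle hij hm
  rw [mul_swap_mul_self] at this
  omega

lemma absLe_swap_iff {v : Perm α} {i j : α} (hij : i ≠ j) :
    absLe (RR α) (swap i j) v ↔ v.SameCycle i j := by
  unfold absLe
  have hswap : L (swap i j) = 1 := L_swap hij
  show L (swap i j) + L (v * (swap i j)⁻¹) = L v ↔ _
  rw [swap_inv, hswap]
  constructor
  · intro heq
    by_contra hc
    rw [L_mul_swap_of_not_sameCycle hij hc] at heq
    omega
  · intro h
    have := L_mul_swap_of_sameCycle hij h
    omega

end CycCount


section Skip

/-- removing a point from its cycle keeps the remaining points in one cycle -/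
lemma skip_sameCycle {π : Perm α} {z : α} (hz : π z ≠ z) {a b : α} (ha : a ≠ z) (hb : b ≠ z)
    (h : π.SameCycle a b) : (swap z (π z) * π).SameCycle a b := by
  obtain ⟨k, hk⟩ := sameCycle_iff_exists_nat_pow.mp h
  clear h
  induction k using Nat.strong_induction_on generalizing b with
  | _ k ih =>
    match k, hk with
    | 0, hk =>
      simp only [pow_zero, Perm.coe_one, id_eq] at hk
      exact hk ▸ SameCycle.refl _ a
    | (k+1), hk =>
      by_cases hm : (π ^ k) a = z
      · match k, hm with
        | 0, hm => simp at hm; exact absurd hm ha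
        | (k'+1), hm =>
          have hm' : (π ^ k') a ≠ z := by
            intro hc
            apply hz
            have h1 : (π ^ (k' + 1)) a = π ((π ^ k') a) := by
              rw [pow_succ', Perm.mul_apply]
            rw [hc] at h1
            rw [hm] at h1
            exact h1.symm
          have h1 : (swap z (π z) * π).SameCycle a ((π ^ k') a) :=
            ih k' (by omega) hm' rfl
          have h2 : (swap z (π z) * π) ((π ^ k') a) = b := by
            have hπ : π ((π ^ k') a) = z := by
              have : (π ^ (k' + 1)) a = π ((π ^ k') a) := by
                rw [pow_succ', Perm.mul_apply]
              rw [← this, hm]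
            rw [Perm.mul_apply, hπ, swap_apply_left, ← hk]
            have : (π ^ (k' + 1 + 1)) a = π ((π ^ (k' + 1)) a) := by
              rw [pow_succ', Perm.mul_apply]
            rw [this, hm]
          exact h1.trans ⟨1, by simpa using h2⟩
      · have h1 : (swap z (π z) * π).SameCycle a ((π ^ k) a) := ih k (by omega) hm rfl
        have h2 : (swap z (π z) * π) ((π ^ k) a) = b := by
          have hπ : π ((π ^ k) a) = b := by
            rw [← hk, pow_succ', Perm.mul_apply]
          rw [Perm.mul_apply, hπ]
          apply swap_apply_of_ne_of_ne hb
          intro hc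
          exact hm (π.injective (by rw [hπ, hc]))
        exact h1.trans ⟨1, by simpa using h2⟩

lemma skip_mul_eq {π : Perm α} (z : α) :
    swap z (π z) * π = π * swap (π⁻¹ z) z := by
  have h := Equiv.swap_apply_apply π (π⁻¹ z) z
  simp only [Perm.coe_inv, apply_symm_apply] at h ⊢
  rw [h]
  group

lemma L_skip {π : Perm α} {z : α} (hz : π z ≠ z) : L (swap z (π z) * π) + 1 = L π := by
  rw [skip_mul_eq]
  apply L_mul_swap_of_sameCycle
  · intro hc
    apply hz
    have := congrArg π hc
    simpa using this.symm
  · exact ⟨1, by simp⟩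

lemma absLe_skip {c π : Perm α} (h : absLe (RR α) π c) {z : α} (hz : π z ≠ z) :
    absLe (RR α) (swap z (π z) * π) c := by
  have hzswap : z ≠ π z := fun hc => hz hc.symm
  set q := swap z (π z) * π with hq
  have h1 : L q + 1 = L π := L_skip hz
  have h2 : L (c * q⁻¹) ≤ L (c * π⁻¹) + 1 := by
    have : c * q⁻¹ = (c * π⁻¹) * swap z (π z) := by
      rw [hq]; simp [mul_assoc, swap_inv]
    rw [this]
    calc L ((c * π⁻¹) * swap z (π z)) ≤ L (c * π⁻¹) + L (swap z (π z)) := L_mul_le _ _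
      _ = L (c * π⁻¹) + 1 := by rw [L_swap hzswap]
  have h3 : L c ≤ L q + L (c * q⁻¹) := by
    calc L c = L ((c * q⁻¹) * q) := by simp [mul_assoc]
      _ ≤ L (c * q⁻¹) + L q := L_mul_le _ _
      _ = L q + L (c * q⁻¹) := by omega
  have h4 : L π + L (c * π⁻¹) = L c := h
  show L q + L (c * q⁻¹) = L c
  omega

end Skip


section FinPart

variable {m : ℕ}

open Fin.NatCast Fin.CommRing in
lemma finRotate_pow_apply (k : ℕ) (x : Fin (m + 2)) :
    ((finRotate (m + 2)) ^ k) x = x + (k : Fin (m + 2)) := by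
  induction k with
  | zero => simp
  | succ k ih =>
    rw [pow_succ', Perm.mul_apply, ih, finRotate_succ_apply]
    push_cast
    ring

open Fin.NatCast Fin.CommRing in
lemma sameCycle_finRotate (x y : Fin (m + 2)) : (finRotate (m + 2)).SameCycle x y :=
  sameCycle_iff_exists_nat_pow.mpr ⟨(y - x).val, by
    rw [finRotate_pow_apply, Fin.cast_val_eq_self]; abel⟩

lemma cyc_finRotate : cyc (finRotate (m + 2)) = 1 := by
  rw [cyc, Nat.card_eq_one_iff_unique]
  constructor
  · constructor
    intro q r
    obtain ⟨a, rfl⟩ := Quotient.exists_rep q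
    obtain ⟨b, rfl⟩ := Quotient.exists_rep r
    exact Quotient.sound (sameCycle_finRotate a b)
  · exact ⟨Quotient.mk _ 0⟩

lemma L_finRotate : L (finRotate (m + 2)) + 1 = m + 2 := by
  have := L_add_cyc (finRotate (m + 2))
  rw [cyc_finRotate] at this
  simpa using this

/-- cyclic distance from `x` to `y` -/
def DD (x y : Fin (m + 2)) : ℕ := (y - x).val

lemma DD_eq_zero_iff {x y : Fin (m + 2)} : DD x y = 0 ↔ y = x := by
  unfold DD
  have h : (y - x).val = 0 ↔ y - x = 0 := by rw [Fin.ext_iff]; simp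
  rw [h, sub_eq_zero]

lemma DD_self (x : Fin (m + 2)) : DD x x = 0 := DD_eq_zero_iff.mpr rfl

lemma DD_inj {x y z : Fin (m + 2)} (h : DD x y = DD x z) : y = z := by
  unfold DD at h
  have h2 : y - x = z - x := Fin.val_injective h
  exact sub_left_inj.mp h2

lemma DD_lt (x y : Fin (m + 2)) : DD x y < m + 2 := (y - x).isLt

lemma DD_val (x y : Fin (m + 2)) : DD x y = (((m + 2) - x.val) + y.val) % (m + 2) := by
  unfold DD
  rw [Fin.sub_def]

lemma DD_of_le {x y : Fin (m + 2)} (h : x.val ≤ y.val) : DD x y = y.val - x.val := by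
  rw [DD_val]
  have hx := x.isLt
  have hy := y.isLt
  have h1 : ((m + 2) - x.val) + y.val = (m + 2) + (y.val - x.val) := by omega
  rw [h1, Nat.add_mod_left, Nat.mod_eq_of_lt (by omega)]

lemma DD_of_gt {x y : Fin (m + 2)} (h : y.val < x.val) : DD x y = y.val + (m + 2) - x.val := by
  rw [DD_val]
  have hx := x.isLt
  have hy := y.isLt
  have h1 : ((m + 2) - x.val) + y.val = y.val + (m + 2) - x.val := by omega
  rw [h1, Nat.mod_eq_of_lt (by omega)]

open Fin.NatCast Fin.CommRing in
lemma DD_succ {x s : Fin (m + 2)} (h : DD x s < m + 1) : DD x (s + 1) = DD x s + 1 := by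
  have key : (s + 1) - x = (s - x) + 1 := by ring
  unfold DD
  rw [key]
  apply Fin.val_add_one_of_lt
  rw [Fin.lt_iff_val_lt_val, Fin.val_last]
  exact h

/-- the invariant-set argument: starting strictly inside the arc `(a, b]` one never reaches
`a` under `finRotate * swap a b`. -/
lemma not_sameCycle_rot_swap {a b e : Fin (m + 2)} (h1 : 0 < DD a e) (h2 : DD a e < DD a b) :
    ¬ (finRotate (m + 2) * swap a b).SameCycle a e := by
  intro hcon
  have hba : 0 < DD a b := by omega
  have hstep : ∀ s : Fin (m + 2), 0 < DD a s → DD a s ≤ DD a b →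
      0 < DD a ((finRotate (m + 2) * swap a b) s) ∧
        DD a ((finRotate (m + 2) * swap a b) s) ≤ DD a b := by
    intro s hs1 hs2
    have hsa : s ≠ a := fun hc => by rw [hc, DD_self] at hs1; omega
    by_cases hsb : s = b
    · have : (finRotate (m + 2) * swap a b) s = a + 1 := by
        rw [hsb, Perm.mul_apply, swap_apply_right, finRotate_succ_apply]
      rw [this]
      have hDD : DD a (a + 1) = 1 := by
        have h0 : DD a a < m + 1 := by rw [DD_self]; omega
        rw [DD_succ h0, DD_self]
      rw [hDD]
      omega
    · have hlt : DD a s < DD a b := by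
        rcases Nat.lt_or_ge (DD a s) (DD a b) with h | h
        · exact h
        · exact absurd (DD_inj (le_antisymm hs2 h)) hsb
      have : (finRotate (m + 2) * swap a b) s = s + 1 := by
        rw [Perm.mul_apply, swap_apply_of_ne_of_ne hsa hsb, finRotate_succ_apply]
      rw [this, DD_succ (by have := DD_lt a b; omega)]
      omega
  have hiter : ∀ k : ℕ, 0 < DD a (((finRotate (m + 2) * swap a b) ^ k) e) ∧
      DD a (((finRotate (m + 2) * swap a b) ^ k) e) ≤ DD a b := by
    intro k
    induction k with
    | zero => simpa using ⟨h1, by omega⟩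
    | succ k ih =>
      rw [pow_succ', Perm.mul_apply]
      exact hstep _ ih.1 ih.2
  obtain ⟨k, hk⟩ := sameCycle_iff_exists_nat_pow.mp hcon.symm
  have := (hiter k).1
  rw [hk, DD_self] at this
  omega

/-- noncrossing elements act by increasing cyclic steps on each orbit (L4) -/
lemma inc_of_absLe {v : Perm (Fin (m + 2))}
    (hv : absLe (RR (Fin (m + 2))) v (finRotate (m + 2))) :
    ∀ x y, v.SameCycle x y → y ≠ x → DD x (v x) ≤ DD x y := by
  suffices h : ∀ k, ∀ v : Perm (Fin (m + 2)), L v = k →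
      absLe (RR (Fin (m + 2))) v (finRotate (m + 2)) →
      ∀ x y, v.SameCycle x y → y ≠ x → DD x (v x) ≤ DD x y by
    exact h (L v) v rfl hv
  intro k
  induction k using Nat.strong_induction_on with
  | _ k ih =>
    intro v hk hvle x y hxy hyx
    by_contra hcon
    push_neg at hcon
    have hvx : v x ≠ x := fun hfix => hyx (sameCycle_of_fixed hfix hxy)
    have hyne_vx : y ≠ v x := by
      intro hc; rw [hc] at hcon; omega
    by_cases hzex : ∃ z, v z ≠ z ∧ z ≠ x ∧ z ≠ y ∧ z ≠ v x
    · obtain ⟨z, hz1, hz2, hz3, hz4⟩ := hzex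
      have hq1 : L (swap z (v z) * v) + 1 = L v := L_skip hz1
      have hq2 : absLe (RR (Fin (m + 2))) (swap z (v z) * v) (finRotate (m + 2)) :=
        absLe_skip hvle hz1
      have hqx : (swap z (v z) * v) x = v x := by
        rw [Perm.mul_apply]
        apply swap_apply_of_ne_of_ne
        · exact fun hc => hz4 hc.symm
        · exact fun hc => hz2 (v.injective hc).symm
      have hsc : (swap z (v z) * v).SameCycle x y :=
        skip_sameCycle hz1 (Ne.symm hz2) (Ne.symm hz3) hxy
      have := ih (L (swap z (v z) * v)) (by omega) _ rfl hq2 x y hsc hyx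
      rw [hqx] at this
      omega
    · push_neg at hzex
      -- v is the 3-cycle x → v x → y → x
      have hyfix : v y ≠ y := by
        intro hc
        exact hyx (sameCycle_of_fixed hc hxy.symm).symm
      have hxy' : x ≠ y := fun hc => hyx hc.symm
      have hxvx : x ≠ v x := fun hc => hvx hc.symm
      have hvy_nf : v (v y) ≠ v y := fun hc => hyfix (v.injective hc)
      -- v (v x) = y
      have hvvx_eq : v (v x) = y := by
        have hw1 : v (v x) ≠ x := by
          intro hc1
          have hvy_ne : v y ≠ x := by
            intro hc
            rw [← hc1] at hc
            exact hyne_vx (v.injective hc)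
          have := hzex (v y) hvy_nf hvy_ne hyfix
          exact hxy' (v.injective this).symm
        have hw_nf : v (v (v x)) ≠ v (v x) := by
          intro hc
          have hsc2' : v.SameCycle x (v (v x)) := ⟨2, by rw [zpow_two]; rfl⟩
          exact hw1 (sameCycle_of_fixed hc hsc2'.symm).symm
        by_contra hww
        have := hzex (v (v x)) hw_nf hw1 hww
        exact (fun hc => hvx (v.injective hc)) this
      have hvy_eq : v y = x := by
        by_contra hvy_ne
        have := hzex (v y) hvy_nf hvy_ne hyfix
        exact hxy' (v.injective this).symm
      have hveq : v = swap x y * swap x (v x) := by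
        ext s
        by_cases hs1 : s = x
        · subst hs1
          rw [Perm.mul_apply, swap_apply_left,
            swap_apply_of_ne_of_ne (fun hc => hxvx hc.symm) (fun hc => hyne_vx hc.symm)]
        by_cases hs2 : s = v x
        · subst hs2
          rw [Perm.mul_apply, swap_apply_right, swap_apply_left, hvvx_eq]
        by_cases hs3 : s = y
        · subst hs3
          rw [Perm.mul_apply, swap_apply_of_ne_of_ne (fun hc => hxy' hc.symm) hs2,
            swap_apply_right, hvy_eq]
        · have hfix : v s = s := by
            by_contra hns
            exact hs2 (hzex s hns hs1 hs3)
          rw [hfix, Perm.mul_apply, swap_apply_of_ne_of_ne hs1 hs2,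
            swap_apply_of_ne_of_ne hs1 hs3]
      -- length computation gives a contradiction
      have hd1 : 0 < DD x y :=
        Nat.pos_of_ne_zero (fun hc => hyx (DD_eq_zero_iff.mp hc))
      have hnsc : ¬ (finRotate (m + 2) * swap x (v x)).SameCycle x y :=
        not_sameCycle_rot_swap hd1 hcon
      have hL1 : L (finRotate (m + 2) * swap x (v x)) + 1 = L (finRotate (m + 2)) :=
        L_mul_swap_of_sameCycle hxvx (sameCycle_finRotate x (v x))
      have hL2 : L ((finRotate (m + 2) * swap x (v x)) * swap x y) =
          L (finRotate (m + 2) * swap x (v x)) + 1 :=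
        L_mul_swap_of_not_sameCycle hxy' hnsc
      have hinv : v⁻¹ = swap x (v x) * swap x y := by
        conv_lhs => rw [hveq]
        rw [mul_inv_rev, swap_inv, swap_inv]
      have hcv : finRotate (m + 2) * v⁻¹ = (finRotate (m + 2) * swap x (v x)) * swap x y := by
        rw [hinv, ← mul_assoc]
      have hvle' : L v + L (finRotate (m + 2) * v⁻¹) = L (finRotate (m + 2)) := hvle
      rw [hcv, hL2] at hvle'
      have hLv : L v = 0 := by omega
      exact hvx (by rw [eq_one_of_L_eq_zero hLv]; simp)

end FinPart


section JoinFacts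

/-- F2: `w` preserves the orbits of any upper bound of the reflections below `w`. -/
lemma join_orbit (π w : Perm α) (hA : ∀ a ∈ {t : Perm α | t ∈ RR α ∧ absLe (RR α) t w}, absLe (RR α) a π)
    (j : α) : π.SameCycle j (w j) := by
  by_cases hwj : w j = j
  · rw [hwj]
  · have hne : j ≠ w j := fun hc => hwj hc.symm
    have ht : swap j (w j) ∈ {t : Perm α | t ∈ RR α ∧ absLe (RR α) t w} :=
      ⟨⟨j, w j, hne, rfl⟩, (absLe_swap_iff hne).mpr ⟨1, by simp⟩⟩
    exact (absLe_swap_iff hne).mp (hA _ ht)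

/-- F3: the noncrossing join of the reflections below `w` moves no fixed point of `w`. -/
lemma join_support {c π w : Perm α}
    (hπc : absLe (RR α) π c)
    (hA : ∀ a ∈ {t : Perm α | t ∈ RR α ∧ absLe (RR α) t w}, absLe (RR α) a π)
    (hmin : ∀ q : Perm α, absLe (RR α) q c →
      (∀ a ∈ {t : Perm α | t ∈ RR α ∧ absLe (RR α) t w}, absLe (RR α) a q) →
      absLe (RR α) π q)
    {j : α} (hπj : π j ≠ j) : w j ≠ j := by
  intro hwj
  have hq_le : absLe (RR α) (swap j (π j) * π) c := absLe_skip hπc hπj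
  have hq_A : ∀ a ∈ {t : Perm α | t ∈ RR α ∧ absLe (RR α) t w},
      absLe (RR α) a (swap j (π j) * π) := by
    rintro t ⟨hsw, htw⟩
    obtain ⟨a, b, hab, rfl⟩ := hsw
    have hscw : w.SameCycle a b := (absLe_swap_iff hab).mp htw
    have haj : a ≠ j := by
      intro hc
      subst hc
      exact hab (sameCycle_of_fixed hwj hscw).symm
    have hbj : b ≠ j := by
      intro hc
      subst hc
      exact hab (sameCycle_of_fixed hwj hscw.symm)
    have hscπ : π.SameCycle a b := (absLe_swap_iff hab).mp (hA _ ⟨⟨a, b, hab, rfl⟩, htw⟩)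
    exact (absLe_swap_iff hab).mpr (skip_sameCycle hπj haj hbj hscπ)
  have h3 : absLe (RR α) π (swap j (π j) * π) := hmin _ hq_le hq_A
  have h1 : L (swap j (π j) * π) + 1 = L π := L_skip hπj
  have h2 : L π + L ((swap j (π j) * π) * π⁻¹) = L (swap j (π j) * π) := h3
  omega

/-- counting nonsingleton cycles via orbit maxima, for permutations of a `LinearOrder` -/
lemma card_cycleFactors_eq_card_maxima {β : Type*} [Fintype β] [DecidableEq β] [LinearOrder β]
    (π : Perm β) :
    ∀ (M : Finset β), (∀ j, j ∈ M ↔ π j ≠ j ∧ ∀ y, π.SameCycle j y → y ≤ j) →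
      M.card = π.cycleFactorsFinset.card := by
  intro M hM
  apply Finset.card_bij (fun j _ => π.cycleOf j)
  · intro j hj
    rw [Equiv.Perm.cycleOf_mem_cycleFactorsFinset_iff, Equiv.Perm.mem_support]
    exact ((hM j).mp hj).1
  · intro j hj j' hj' heq
    have hmj := (hM j).mp hj
    have hmj' := (hM j').mp hj'
    have hsup' : j' ∈ (π.cycleOf j').support :=
      (Equiv.Perm.mem_support_cycleOf_iff).mpr ⟨SameCycle.refl _ _, Equiv.Perm.mem_support.mpr hmj'.1⟩
    rw [← heq] at hsup'
    have hsc : π.SameCycle j j' := ((Equiv.Perm.mem_support_cycleOf_iff).mp hsup').1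
    exact le_antisymm (hmj'.2 j hsc.symm) (hmj.2 j' hsc)
  · intro γ hγ
    have hγ' := (Equiv.Perm.mem_cycleFactorsFinset_iff).mp hγ
    have hne : γ.support.Nonempty := by
      rw [Finset.nonempty_iff_ne_empty]
      intro hc
      exact hγ'.1.ne_one (Equiv.Perm.support_eq_empty_iff.mp hc)
    set j := γ.support.max' hne with hjdef
    have hjs : j ∈ γ.support := γ.support.max'_mem hne
    have hγeq : γ = π.cycleOf j := Equiv.Perm.cycle_is_cycleOf hjs hγ
    have hπj : π j ≠ j := by
      have := hγ'.2 j hjs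
      rw [← this]
      exact Equiv.Perm.mem_support.mp hjs
    refine ⟨j, ?_, hγeq.symm⟩
    rw [hM]
    refine ⟨hπj, ?_⟩
    intro y hy
    have hy' : y ∈ γ.support := by
      rw [hγeq]
      exact (Equiv.Perm.mem_support_cycleOf_iff).mpr ⟨hy, Equiv.Perm.mem_support.mpr hπj⟩
    exact Finset.le_max' _ y hy'

end JoinFacts

end PopAux

open PopTsack PopAux Equiv Equiv.Perm

/-- Let `n ≥ 2` and let `S_n` be the symmetric group with Coxeter element
`c = (1 2 ⋯ n)`, reflections the transpositions.  For every `w`,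
`aexc(Pop_T(w)) = aexc(w) - cyc_{>1}(π_T(w))`, where `cyc_{>1}` counts non-singleton cycles
(stated additively: `aexc(Pop_T(w)) + cyc_{>1}(π_T(w)) = aexc(w)`). -/
theorem aexc_popTsack_typeA {n : ℕ} (hn : 2 ≤ n) (w : Equiv.Perm (Fin n)) :
    Equiv.Perm.aexc (popT {t : Equiv.Perm (Fin n) | t.IsSwap} (finRotate n) w) +
      (piT {t : Equiv.Perm (Fin n) | t.IsSwap} (finRotate n) w).cycleFactorsFinset.card =
      Equiv.Perm.aexc w := by
  obtain ⟨m, rfl⟩ : ∃ m, n = m + 2 := ⟨n - 2, by omega⟩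
  classical
  by_cases h : ∃ p, IsNCJoin {t : Equiv.Perm (Fin (m + 2)) | t.IsSwap} (finRotate (m + 2))
      {t | t ∈ {t : Equiv.Perm (Fin (m + 2)) | t.IsSwap} ∧
        absLe {t : Equiv.Perm (Fin (m + 2)) | t.IsSwap} t w} p
  case neg =>
    have hπeq : piT {t : Equiv.Perm (Fin (m + 2)) | t.IsSwap} (finRotate (m + 2)) w = 1 :=
      dif_neg h
    show Equiv.Perm.aexc
        (w * (piT {t : Equiv.Perm (Fin (m + 2)) | t.IsSwap} (finRotate (m + 2)) w)⁻¹) +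
        (piT {t : Equiv.Perm (Fin (m + 2)) | t.IsSwap} (finRotate (m + 2)) w).cycleFactorsFinset.card =
        Equiv.Perm.aexc w
    rw [hπeq]
    simp [Equiv.Perm.cycleFactorsFinset_one]
  case pos =>
    have hπeq : piT {t : Equiv.Perm (Fin (m + 2)) | t.IsSwap} (finRotate (m + 2)) w = h.choose :=
      dif_pos h
    have hJ : IsNCJoin {t : Equiv.Perm (Fin (m + 2)) | t.IsSwap} (finRotate (m + 2))
        {t | t ∈ {t : Equiv.Perm (Fin (m + 2)) | t.IsSwap} ∧
          absLe {t : Equiv.Perm (Fin (m + 2)) | t.IsSwap} t w}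
        (piT {t : Equiv.Perm (Fin (m + 2)) | t.IsSwap} (finRotate (m + 2)) w) := by
      rw [hπeq]; exact h.choose_spec
    show Equiv.Perm.aexc
        (w * (piT {t : Equiv.Perm (Fin (m + 2)) | t.IsSwap} (finRotate (m + 2)) w)⁻¹) +
        (piT {t : Equiv.Perm (Fin (m + 2)) | t.IsSwap} (finRotate (m + 2)) w).cycleFactorsFinset.card =
        Equiv.Perm.aexc w
    set π := piT {t : Equiv.Perm (Fin (m + 2)) | t.IsSwap} (finRotate (m + 2)) w with hπdefn
    obtain ⟨hπc, hA, hmin⟩ := hJ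
    -- the three structural facts
    have hF2 : ∀ j, π.SameCycle j (w j) := join_orbit π w hA
    have hF3 : ∀ j : Fin (m + 2), π j ≠ j → w j ≠ j := fun j hj =>
      join_support hπc hA hmin hj
    have hF1 : ∀ x y, π.SameCycle x y → y ≠ x → DD x (π x) ≤ DD x y := inc_of_absLe hπc
    -- pointwise key claim
    have key : ∀ j : Fin (m + 2),
        ((w j < j ↔ (w j < π j ∨ (π j ≠ j ∧ ∀ y, π.SameCycle j y → y ≤ j)))
          ∧ ¬(w j < π j ∧ (π j ≠ j ∧ ∀ y, π.SameCycle j y → y ≤ j))) := by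
      intro j
      by_cases hπj : π j = j
      · have hwj : w j = j := sameCycle_of_fixed hπj (hF2 j)
        rw [hwj, hπj]
        constructor
        · constructor
          · intro hlt; exact absurd hlt (lt_irrefl j)
          · rintro (hlt | ⟨hne, _⟩)
            · exact hlt
            · exact absurd rfl hne
        · rintro ⟨hlt, _⟩; exact absurd hlt (lt_irrefl j)
      · have hwj : w j ≠ j := hF3 j hπj
        have hsc := hF2 j
        have hjval := j.isLt
        have hπjval := (π j).isLt
        have hwjval := (w j).isLt
        by_cases hmax : ∀ y, π.SameCycle j y → y ≤ j
        · have hwlt : w j < j := lt_of_le_of_ne (hmax _ hsc) hwj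
          have hπlt : π j < j := lt_of_le_of_ne (hmax _ ⟨1, by simp⟩) hπj
          have hnot : ¬ (w j < π j) := by
            intro hlt
            have hD := hF1 j (w j) hsc hwj
            rw [DD_of_gt (Fin.lt_def.mp hπlt), DD_of_gt (Fin.lt_def.mp hwlt)] at hD
            have := Fin.lt_def.mp hlt
            omega
          exact ⟨⟨fun _ => Or.inr ⟨hπj, hmax⟩, fun _ => hwlt⟩, fun hp => hnot hp.1⟩
        · push_neg at hmax
          obtain ⟨y₀, hy₀sc, hy₀gt⟩ := hmax
          have hy₀val := y₀.isLt
          have hπgt : j < π j := by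
            by_contra hle
            have hπlt : π j < j := lt_of_le_of_ne (not_lt.mp hle) hπj
            have hD := hF1 j y₀ hy₀sc hy₀gt.ne'
            rw [DD_of_gt (Fin.lt_def.mp hπlt), DD_of_le (le_of_lt (Fin.lt_def.mp hy₀gt))] at hD
            have := Fin.lt_def.mp hy₀gt
            omega
          constructor
          · constructor
            · intro hlt; exact Or.inl (lt_trans hlt hπgt)
            · rintro (hlt | ⟨_, hmax'⟩)
              · by_contra hnlt
                have hjw : j < w j := lt_of_le_of_ne (not_lt.mp hnlt) (Ne.symm hwj)
                have hD := hF1 j (w j) hsc hwj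
                rw [DD_of_le (le_of_lt (Fin.lt_def.mp hπgt)),
                  DD_of_le (le_of_lt (Fin.lt_def.mp hjw))] at hD
                have h1 := Fin.lt_def.mp hlt
                have h2 := Fin.lt_def.mp hjw
                have h3 := Fin.lt_def.mp hπgt
                omega
              · exact absurd (hmax' y₀ hy₀sc) (not_le.mpr hy₀gt)
          · rintro ⟨_, _, hmax'⟩
            exact absurd (hmax' y₀ hy₀sc) (not_le.mpr hy₀gt)
    -- Finset bookkeeping
    have hsplit : (Finset.univ.filter fun j : Fin (m + 2) => w j < j) =
        (Finset.univ.filter fun j : Fin (m + 2) => w j < π j) ∪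
        (Finset.univ.filter fun j : Fin (m + 2) =>
          π j ≠ j ∧ ∀ y, π.SameCycle j y → y ≤ j) := by
      ext j
      simp only [Finset.mem_filter, Finset.mem_union, Finset.mem_univ, true_and]
      exact (key j).1
    have hdisj : Disjoint (Finset.univ.filter fun j : Fin (m + 2) => w j < π j)
        (Finset.univ.filter fun j : Fin (m + 2) =>
          π j ≠ j ∧ ∀ y, π.SameCycle j y → y ≤ j) := by
      rw [Finset.disjoint_left]
      intro j h1 h2
      simp only [Finset.mem_filter, Finset.mem_univ, true_and] at h1 h2
      exact (key j).2 ⟨h1, h2⟩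
    have hMcard : (Finset.univ.filter fun j : Fin (m + 2) =>
        π j ≠ j ∧ ∀ y, π.SameCycle j y → y ≤ j).card = π.cycleFactorsFinset.card := by
      apply card_cycleFactors_eq_card_maxima π
      intro j
      simp only [Finset.mem_filter, Finset.mem_univ, true_and]
    have e1 : Equiv.Perm.aexc w = (Finset.univ.filter fun j : Fin (m + 2) => w j < j).card := by
      unfold Equiv.Perm.aexc
      apply Finset.card_nbij' (fun i => w⁻¹ i) (fun j => w j)
      · intro a ha
        simp only [Finset.mem_filter, Finset.mem_univ, true_and] at ha ⊢
        simp only [Finset.coe_filter, Finset.mem_univ, true_and, Set.mem_setOf_eq, Perm.coe_inv, apply_symm_apply, symm_apply_apply] at ha ⊢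
        exact ha
      · intro a ha
        simp only [Finset.mem_filter, Finset.mem_univ, true_and] at ha ⊢
        simp only [Finset.coe_filter, Finset.mem_univ, true_and, Set.mem_setOf_eq, Perm.coe_inv, apply_symm_apply, symm_apply_apply] at ha ⊢
        exact ha
      · intro a _; simp
      · intro a _; simp
    have e2 : Equiv.Perm.aexc (w * π⁻¹) =
        (Finset.univ.filter fun j : Fin (m + 2) => w j < π j).card := by
      unfold Equiv.Perm.aexc
      have hinv : ∀ a : Fin (m + 2), (w * π⁻¹)⁻¹ a = π (w⁻¹ a) := by
        intro a
        rw [mul_inv_rev, inv_inv, Perm.mul_apply]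
      apply Finset.card_nbij' (fun i => w⁻¹ i) (fun j => w j)
      · intro a ha
        simp only [Finset.mem_filter, Finset.mem_univ, true_and, hinv] at ha ⊢
        simp only [Finset.coe_filter, Finset.mem_univ, true_and, Set.mem_setOf_eq, Perm.coe_inv, apply_symm_apply, symm_apply_apply] at ha ⊢
        exact ha
      · intro a ha
        simp only [Finset.mem_filter, Finset.mem_univ, true_and, hinv] at ha ⊢
        simp only [Finset.coe_filter, Finset.mem_univ, true_and, Set.mem_setOf_eq, Perm.coe_inv, apply_symm_apply, symm_apply_apply] at ha ⊢
        exact ha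
      · intro a _; simp
      · intro a _; simp
    rw [e1, e2, hsplit, Finset.card_union_of_disjoint hdisj, hMcard]
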